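/- Fix integers l ≥ 2 and i ≥ 1. Let P be the commutative polynomial ring over ℤ in variables x_{k,m} for integers k ≥ 1 and 0 ≤ m ≤ l−1, with the convention x_{0,m} := 1. Let A be the l×l matrix over the power series ring P[[t]] with entries A_{r,c} = Σ_s x_{l·s + r − c, c} · tˢ for r,c ∈ {0,…,l−1}, the sum over all integers s ≥ 0 with l·s + r − c ≥ 0. Let a_i ∈ P be the coefficient of t^i in det A. Then the coefficient in a_i of the monomial x_{i,0}·x_{i,1}⋯x_{i,l−1} equals the sign of the permutation of {0,…,l−1} given by c ↦ c + i (mod l). -/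

import Mathlib

/-- The generator `x_{k,m}` (for `k ≥ 1`) of the polynomial ring, with the convention
`x_{0,m} = 1`. -/
noncomputable def xv (l : ℕ) (k : ℕ) (m : Fin l) : MvPolynomial (ℕ × Fin l) ℤ :=
  if k = 0 then 1 else MvPolynomial.X (k, m)

/-- The `l×l` matrix over `P[[t]]` with entries
`A_{r,c} = Σ_s x_{l·s+r−c, c}·tˢ`, the sum over all `s ≥ 0` with `l·s + r − c ≥ 0`. -/
noncomputable def Amat (l : ℕ) :
    Matrix (Fin l) (Fin l) (PowerSeries (MvPolynomial (ℕ × Fin l) ℤ)) :=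
  fun r c => PowerSeries.mk fun s =>
    if 0 ≤ ((l : ℤ) * (s : ℤ) + ((r : ℕ) : ℤ) - ((c : ℕ) : ℤ)) then
      xv l ((l : ℤ) * (s : ℤ) + ((r : ℕ) : ℤ) - ((c : ℕ) : ℤ)).toNat c
    else 0

open MvPolynomial Finset

lemma prod_monomial_one {ι σ : Type*} (s : Finset ι) (e : ι → (σ →₀ ℕ)) :
    ∏ c ∈ s, MvPolynomial.monomial (e c) (1:ℤ) = MvPolynomial.monomial (∑ c ∈ s, e c) 1 := by
  classical
  induction s using Finset.cons_induction with
  | empty => simp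
  | cons a s ha ih =>
    rw [Finset.prod_cons, Finset.sum_cons, ih, MvPolynomial.monomial_mul, one_mul]

lemma finRotate_pow_val (n i : ℕ) (c : Fin (n+1)) :
    ((((finRotate (n+1)) ^ i) c : Fin (n+1)) : ℕ) = ((c : ℕ) + i) % (n+1) := by
  induction i with
  | zero => simp [Nat.mod_eq_of_lt c.isLt]
  | succ i ih =>
    rw [pow_succ', Equiv.Perm.mul_apply, finRotate_succ_apply, Fin.add_def]
    simp only [Fin.val_one', ih]
    conv_lhs => rw [Nat.mod_add_mod, Nat.add_mod_mod]
    congr 1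

lemma xv_eq (l k : ℕ) (c : Fin l) :
    xv l k c = MvPolynomial.monomial
      (if k = 0 then 0 else Finsupp.single ((k, c) : ℕ × Fin l) 1) (1:ℤ) := by
  unfold xv
  split
  · simp
  · rfl

lemma coeff_term (l i : ℕ) (hi : 1 ≤ i) (σ : Equiv.Perm (Fin l)) (d : Fin l → ℕ) :
    MvPolynomial.coeff (∑ m : Fin l, Finsupp.single ((i, m) : ℕ × Fin l) 1)
      (∏ c : Fin l, PowerSeries.coeff (R := MvPolynomial (ℕ × Fin l) ℤ) (d c) (Amat l (σ c) c))
    = if ∀ c : Fin l, l * d c + ((σ c : Fin l) : ℕ) = i + ((c : Fin l) : ℕ) then 1 else 0 := by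
  classical
  have hcast : ∀ c : Fin l, (l : ℤ) * (d c : ℤ) + (((σ c : Fin l) : ℕ) : ℤ) - (((c : Fin l) : ℕ) : ℤ)
      = ((l * d c + ((σ c : Fin l) : ℕ) : ℕ) : ℤ) - (((c : Fin l) : ℕ) : ℤ) := by
    intro c; push_cast; ring
  by_cases hpos : ∀ c : Fin l,
      (0:ℤ) ≤ (l : ℤ) * (d c : ℤ) + (((σ c : Fin l) : ℕ) : ℤ) - (((c : Fin l) : ℕ) : ℤ)
  · -- all entries are monomials
    set k : Fin l → ℕ :=
      fun c => ((l : ℤ) * (d c : ℤ) + (((σ c : Fin l) : ℕ) : ℤ) - (((c : Fin l) : ℕ) : ℤ)).toNat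
      with hk
    have hfac : ∀ c : Fin l,
        PowerSeries.coeff (R := MvPolynomial (ℕ × Fin l) ℤ) (d c) (Amat l (σ c) c)
        = MvPolynomial.monomial
            (if k c = 0 then 0 else Finsupp.single ((k c, c) : ℕ × Fin l) 1) (1:ℤ) := by
      intro c
      rw [Amat, PowerSeries.coeff_mk, if_pos (hpos c), xv_eq]
    rw [Finset.prod_congr rfl (fun c _ => hfac c), prod_monomial_one, MvPolynomial.coeff_monomial]
    have hk_iff : ∀ c : Fin l, k c = i ↔ l * d c + ((σ c : Fin l) : ℕ) = i + ((c : Fin l) : ℕ) := by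
      intro c
      have h1 := hpos c
      simp only [hk, hcast c] at h1 ⊢
      omega
    have key : (∑ c : Fin l, if k c = 0 then 0 else Finsupp.single ((k c, c) : ℕ × Fin l) 1)
        = (∑ m : Fin l, Finsupp.single ((i, m) : ℕ × Fin l) 1)
        ↔ ∀ c : Fin l, k c = i := by
      constructor
      · intro h c
        have h2 := DFunLike.congr_fun h (i, c)
        rw [Finsupp.finset_sum_apply, Finsupp.finset_sum_apply] at h2
        have hrhs : ∑ m : Fin l, (Finsupp.single ((i, m) : ℕ × Fin l) 1) (i, c) = 1 := by
          simp [Finsupp.single_apply, Prod.ext_iff]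
        rw [hrhs] at h2
        have hlhs : ∑ c' : Fin l,
            (if k c' = 0 then (0 : (ℕ × Fin l) →₀ ℕ)
              else Finsupp.single ((k c', c') : ℕ × Fin l) 1) (i, c)
            = (if k c = 0 then (0 : (ℕ × Fin l) →₀ ℕ)
              else Finsupp.single ((k c, c) : ℕ × Fin l) 1) (i, c) := by
          apply Finset.sum_eq_single_of_mem c (Finset.mem_univ c)
          intro b _ hb
          split
          · rfl
          · rw [Finsupp.single_apply, if_neg]
            simp [Prod.ext_iff, hb]
        rw [hlhs] at h2
        by_cases h0 : k c = 0
        · rw [if_pos h0] at h2; simp at h2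
        · rw [if_neg h0, Finsupp.single_apply] at h2
          by_contra hne
          rw [if_neg (by simp [Prod.ext_iff, hne])] at h2
          exact zero_ne_one h2
      · intro h
        refine Finset.sum_congr rfl fun c _ => ?_
        rw [h c, if_neg (by omega)]
    simp only [key]
    simp only [hk_iff]
  · -- some entry is zero
    push_neg at hpos
    obtain ⟨c0, hc0⟩ := hpos
    have hzero : PowerSeries.coeff (R := MvPolynomial (ℕ × Fin l) ℤ) (d c0) (Amat l (σ c0) c0) = 0 := by
      rw [Amat, PowerSeries.coeff_mk, if_neg (not_le.mpr hc0)]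
    rw [Finset.prod_eq_zero (Finset.mem_univ c0) hzero, MvPolynomial.coeff_zero]
    rw [if_neg]
    intro h
    have := h c0
    rw [hcast c0] at hc0
    omega

/-- Let `a_i` be the coefficient of `t^i` in `det A`. The coefficient in `a_i` of the
monomial `x_{i,0}·x_{i,1}⋯x_{i,l−1}` equals the sign of the permutation of
`{0,…,l−1}` given by `c ↦ c + i (mod l)`. -/
theorem det_coeff_leading_monomial (l : ℕ) (hl : 2 ≤ l) (i : ℕ) (hi : 1 ≤ i) :
    MvPolynomial.coeff (∑ m : Fin l, Finsupp.single ((i, m) : ℕ × Fin l) 1)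
        (PowerSeries.coeff (R := MvPolynomial (ℕ × Fin l) ℤ) i (Matrix.det (Amat l)))
      = ((Equiv.Perm.sign ((finRotate l) ^ i) : ℤˣ) : ℤ) := by
  classical
  rw [Matrix.det_apply, map_sum, MvPolynomial.coeff_sum]
  simp only [Units.smul_def, map_zsmul, PowerSeries.coeff_prod, Finset.smul_sum,
    MvPolynomial.coeff_smul, MvPolynomial.coeff_sum]
  simp only [coeff_term l i hi]
  obtain ⟨n, rfl⟩ : ∃ n, l = n + 1 := ⟨l - 1, by omega⟩
  set σ₀ := finRotate (n+1) ^ i with hσ₀def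
  have hσ₀val : ∀ c : Fin (n+1), ((σ₀ c : Fin (n+1)) : ℕ) = ((c:ℕ) + i) % (n+1) :=
    fun c => finRotate_pow_val n i c
  set d₀ : Fin (n+1) →₀ ℕ := Finsupp.equivFunOnFinite.symm (fun c => ((c:ℕ) + i) / (n+1))
    with hd₀def
  have hd₀app : ∀ c : Fin (n+1), d₀ c = ((c:ℕ) + i) / (n+1) := fun c => rfl
  have hQ0 : ∀ c : Fin (n+1), (n+1) * d₀ c + ((σ₀ c : Fin (n+1)) : ℕ) = i + (c:ℕ) := by
    intro c
    rw [hd₀app, hσ₀val]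
    have := Nat.div_add_mod ((c:ℕ) + i) (n+1)
    omega
  have hQσ : ∀ (σ : Equiv.Perm (Fin (n+1))) (d : Fin (n+1) → ℕ),
      (∀ c, (n+1) * d c + ((σ c : Fin (n+1)) : ℕ) = i + (c:ℕ)) → σ = σ₀ := by
    intro σ d h
    apply Equiv.ext
    intro c
    apply Fin.ext
    rw [hσ₀val]
    calc ((σ c : Fin (n+1)) : ℕ) = ((σ c : Fin (n+1)) : ℕ) % (n+1) :=
          (Nat.mod_eq_of_lt (σ c).isLt).symm
      _ = ((n+1) * d c + ((σ c : Fin (n+1)) : ℕ)) % (n+1) := (Nat.mul_add_mod _ _ _).symm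
      _ = (i + (c:ℕ)) % (n+1) := by rw [h c]
      _ = ((c:ℕ) + i) % (n+1) := by rw [Nat.add_comm]
  have hQd : ∀ (d : Fin (n+1) →₀ ℕ),
      (∀ c, (n+1) * d c + ((σ₀ c : Fin (n+1)) : ℕ) = i + (c:ℕ)) → d = d₀ := by
    intro d h
    ext c
    have h1 := h c
    have h2 := hQ0 c
    have h3 : (n+1) * d c = (n+1) * d₀ c := by omega
    exact Nat.eq_of_mul_eq_mul_left (by omega) h3
  have hmem : d₀ ∈ Finset.univ.finsuppAntidiag i := by
    rw [Finset.mem_finsuppAntidiag]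
    refine ⟨?_, Finset.subset_univ _⟩
    have hsum : ∑ c : Fin (n+1), ((n+1) * d₀ c + ((σ₀ c : Fin (n+1)) : ℕ))
        = ∑ c : Fin (n+1), (i + (c:ℕ)) :=
      Finset.sum_congr rfl fun c _ => hQ0 c
    rw [Finset.sum_add_distrib, Finset.sum_add_distrib, ← Finset.mul_sum] at hsum
    have hperm : ∑ c : Fin (n+1), ((σ₀ c : Fin (n+1)) : ℕ) = ∑ c : Fin (n+1), (c:ℕ) :=
      Equiv.sum_comp σ₀ (fun c => (c:ℕ))
    have hcard : ∑ _c : Fin (n+1), i = (n+1) * i := by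
      simp [Finset.sum_const, mul_comm]
    rw [hperm, hcard] at hsum
    have h4 : (n+1) * (∑ c : Fin (n+1), d₀ c) = (n+1) * i := by omega
    exact Nat.eq_of_mul_eq_mul_left (Nat.succ_pos n) h4
  have inner : ∀ σ : Equiv.Perm (Fin (n+1)),
      (∑ d ∈ Finset.univ.finsuppAntidiag i,
        (((Equiv.Perm.sign σ : ℤˣ) : ℤ) •
          if ∀ c : Fin (n+1), (n+1) * d c + ((σ c : Fin (n+1)) : ℕ) = i + (c:ℕ)
          then (1:ℤ) else 0))
      = if σ = σ₀ then ((Equiv.Perm.sign σ₀ : ℤˣ) : ℤ) else 0 := by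
    intro σ
    by_cases hσ : σ = σ₀
    · subst hσ
      rw [if_pos rfl, Finset.sum_eq_single_of_mem d₀ hmem]
      · rw [if_pos hQ0, smul_eq_mul, mul_one]
      · intro d _ hne
        rw [if_neg (fun h => hne (hQd d h)), smul_zero]
    · rw [if_neg hσ]
      apply Finset.sum_eq_zero
      intro d _
      rw [if_neg (fun h => hσ (hQσ σ (⇑d) h)), smul_zero]
  rw [Finset.sum_congr rfl fun σ _ => inner σ, Finset.sum_ite_eq' Finset.univ σ₀]
  rw [if_pos (Finset.mem_univ σ₀)]
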